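/- arXiv:2208.04463 — 3 statements merged into one kernel-verified Lean document; each statement's English description precedes it below -/
import Mathlib

section
/- Let R = R₀ ⊕ R₁ be a Z₂-graded commutative ring. Then R is a Z₂-graded integral domain if and only if either (1) R₁ = 0 and R₀ is an integral domain, or (2) the zero submodule is a prime R₀-submodule of R₁, (0 :_{R₀} R₁) = 0, and R₁³ ≠ 0. -/
/-- A `ℤ/2ℤ`-grading on a commutative ring `R`: additive subgroups `R0`, `R1` with
`R = R0 ⊕ R1` (internal direct sum) and `Rᵢ · Rⱼ ⊆ R_{i+j}`. -/
structure Z2Grading (R : Type*) [CommRing R] where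
  R0 : AddSubgroup R
  R1 : AddSubgroup R
  one_mem : (1 : R) ∈ R0
  mul_mem_00 : ∀ {a b : R}, a ∈ R0 → b ∈ R0 → a * b ∈ R0
  mul_mem_01 : ∀ {a b : R}, a ∈ R0 → b ∈ R1 → a * b ∈ R1
  mul_mem_11 : ∀ {a b : R}, a ∈ R1 → b ∈ R1 → a * b ∈ R0
  sup_eq_top : R0 ⊔ R1 = ⊤
  inf_eq_bot : R0 ⊓ R1 = ⊥

/-- The sum `S + T` of two subsets of `R`. -/
def setSum {R : Type*} [CommRing R] (S T : Set R) : Set R :=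
  {z : R | ∃ a ∈ S, ∃ b ∈ T, z = a + b}

/-- The additive subgroup of `R` generated by the pairwise products of `S` and `T`
(i.e. the product `S·T` of an ideal/submodule pair). -/
def mulSet {R : Type*} [CommRing R] (S T : Set R) : AddSubgroup R :=
  AddSubgroup.closure {x : R | ∃ a ∈ S, ∃ b ∈ T, x = a * b}

namespace Z2Grading

variable {R : Type*} [CommRing R] (G : Z2Grading R)

/-- The set of homogeneous elements of `R`, namely `R₀ ∪ R₁`. -/
def homogeneous : Set R := ↑G.R0 ∪ ↑G.R1

/-- `R₁²`, the ideal of `R₀` generated by the products of two elements of `R₁`. -/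
def sq : AddSubgroup R := mulSet (↑G.R1) (↑G.R1)

/-- `R₁³ = R₁² · R₁`, an `R₀`-submodule of `R₁`. -/
def cube : AddSubgroup R := mulSet (↑G.sq) (↑G.R1)

/-- `I` is an ideal of the subring `R₀` (viewed inside `R`). -/
def IsIdeal0 (I : AddSubgroup R) : Prop :=
  (I : Set R) ⊆ ↑G.R0 ∧ ∀ a ∈ G.R0, ∀ x ∈ I, a * x ∈ I

/-- `N` is an `R₀`-submodule of `R₁` (viewed inside `R`). -/
def IsSubmodule1 (N : AddSubgroup R) : Prop :=
  (N : Set R) ⊆ ↑G.R1 ∧ ∀ a ∈ G.R0, ∀ x ∈ N, a * x ∈ N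

/-- The residual `(N :_{R₀} R₁) = {a ∈ R₀ : a·R₁ ⊆ N}`. -/
def residual (N : AddSubgroup R) : AddSubgroup R where
  carrier := {a : R | a ∈ G.R0 ∧ ∀ r ∈ G.R1, a * r ∈ N}
  zero_mem' := ⟨G.R0.zero_mem, fun r _ => by simpa using N.zero_mem⟩
  add_mem' := by
    rintro a b ⟨ha0, ha⟩ ⟨hb0, hb⟩
    exact ⟨G.R0.add_mem ha0 hb0, fun r hr => by
      rw [add_mul]; exact N.add_mem (ha r hr) (hb r hr)⟩
  neg_mem' := by
    rintro a ⟨ha0, ha⟩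
    exact ⟨G.R0.neg_mem ha0, fun r hr => by
      rw [neg_mul]; exact N.neg_mem (ha r hr)⟩

/-- `J` is a `ℤ₂`-graded ideal of `R`: the homogeneous components of each of its
elements again belong to `J`, i.e. `J = (J ∩ R₀) ⊕ (J ∩ R₁)`. -/
def IsGradedIdeal (J : Ideal R) : Prop :=
  ∀ x ∈ J, ∃ a b : R, a ∈ G.R0 ∧ b ∈ G.R1 ∧ a ∈ J ∧ b ∈ J ∧ x = a + b

/-- `J` is a `ℤ₂`-graded prime ideal of `R`. -/
def IsGradedPrime (J : Ideal R) : Prop :=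
  G.IsGradedIdeal J ∧ J ≠ ⊤ ∧
    ∀ r ∈ G.homogeneous, ∀ s ∈ G.homogeneous, r * s ∈ J → r ∈ J ∨ s ∈ J

/-- `J` is a `ℤ₂`-graded maximal ideal of `R`. -/
def IsGradedMaximal (J : Ideal R) : Prop :=
  G.IsGradedIdeal J ∧ J ≠ ⊤ ∧
    ∀ J' : Ideal R, G.IsGradedIdeal J' → J ≤ J' → J' = J ∨ J' = ⊤

/-- `p` is a prime ideal of the subring `R₀`. -/
def IsPrime0 (p : AddSubgroup R) : Prop :=
  G.IsIdeal0 p ∧ (p : Set R) ≠ ↑G.R0 ∧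
    ∀ a ∈ G.R0, ∀ b ∈ G.R0, a * b ∈ p → a ∈ p ∨ b ∈ p

/-- `p` is a maximal ideal of the subring `R₀`. -/
def IsMaximal0 (p : AddSubgroup R) : Prop :=
  G.IsIdeal0 p ∧ (p : Set R) ≠ ↑G.R0 ∧
    ∀ I : AddSubgroup R, G.IsIdeal0 I → p ≤ I → (I : Set R) = ↑p ∨ (I : Set R) = ↑G.R0

/-- `N` is a prime `R₀`-submodule of `R₁`. -/
def IsPrimeSubmodule1 (N : AddSubgroup R) : Prop :=
  G.IsSubmodule1 N ∧ (N : Set R) ≠ ↑G.R1 ∧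
    ∀ a ∈ G.R0, ∀ m ∈ G.R1, a * m ∈ N → a ∈ G.residual N ∨ m ∈ N

/-- `N` is a maximal (proper) `R₀`-submodule of `R₁`. -/
def IsMaximalSubmodule1 (N : AddSubgroup R) : Prop :=
  G.IsSubmodule1 N ∧ (N : Set R) ≠ ↑G.R1 ∧
    ∀ N' : AddSubgroup R, G.IsSubmodule1 N' → N ≤ N' →
      (N' : Set R) = ↑N ∨ (N' : Set R) = ↑G.R1

/-- `R` is a `ℤ₂`-graded integral domain. -/
def IsGradedDomain : Prop :=
  (1 : R) ≠ 0 ∧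
    ∀ r ∈ G.homogeneous, ∀ s ∈ G.homogeneous, r * s = 0 → r = 0 ∨ s = 0

/-- `R` is a `ℤ₂`-graded field. -/
def IsGradedField : Prop :=
  (1 : R) ≠ 0 ∧ ∀ r ∈ G.homogeneous, r ≠ 0 → IsUnit r

/-- `R₀` as a subring of `R`. -/
def toSubring : Subring R where
  carrier := ↑G.R0
  one_mem' := G.one_mem
  mul_mem' := fun ha hb => G.mul_mem_00 ha hb
  zero_mem' := G.R0.zero_mem
  add_mem' := fun ha hb => G.R0.add_mem ha hb
  neg_mem' := fun ha => G.R0.neg_mem ha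

/-- The Zariski topology on the homogeneous spectrum `Z₂Spec R`: closed sets are the
`V(I) = {P : I ⊆ P}` for `ℤ₂`-graded ideals `I`. -/
def gradedZariski : TopologicalSpace {Q : Ideal R // G.IsGradedPrime Q} :=
  TopologicalSpace.generateFrom
    {U : Set {Q : Ideal R // G.IsGradedPrime Q} |
      ∃ I : Ideal R, G.IsGradedIdeal I ∧ U = {P | ¬ I ≤ P.1}}

end Z2Grading

/-- `R` is a `ℤ₂`-graded integral domain iff either `R₁ = 0` and `R₀` is an
integral domain, or `0` is a prime `R₀`-submodule of `R₁` with `(0 :_{R₀} R₁) = 0` and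
`R₁³ ≠ 0`. -/
theorem graded_domain_iff {R : Type*} [CommRing R] (G : Z2Grading R) :
    G.IsGradedDomain ↔
      ((G.R1 : Set R) = {0} ∧
        ((1 : R) ≠ 0 ∧ ∀ a ∈ G.R0, ∀ b ∈ G.R0, a * b = 0 → a = 0 ∨ b = 0)) ∨
      (G.IsPrimeSubmodule1 ⊥ ∧ G.residual ⊥ = (⊥ : AddSubgroup R) ∧
        G.cube ≠ (⊥ : AddSubgroup R)) := by
  have hmemres : ∀ (N : AddSubgroup R) (a : R),
      a ∈ G.residual N ↔ a ∈ G.R0 ∧ ∀ r ∈ G.R1, a * r ∈ N := fun _ _ => Iff.rfl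
  constructor
  · rintro ⟨h1, hdom⟩
    by_cases hR1 : (G.R1 : Set R) = {0}
    · exact Or.inl ⟨hR1, h1, fun a ha b hb hab =>
        hdom a (Or.inl ha) b (Or.inl hb) hab⟩
    · right
      obtain ⟨m, hm, hm0⟩ : ∃ m ∈ G.R1, m ≠ 0 := by
        by_contra h
        push_neg at h
        apply hR1
        ext x
        simp only [Set.mem_singleton_iff, SetLike.mem_coe]
        exact ⟨fun hx => h x hx, fun hx => hx ▸ G.R1.zero_mem⟩
      have hbotne : ((⊥ : AddSubgroup R) : Set R) ≠ ↑G.R1 := by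
        intro h
        exact hm0 (AddSubgroup.mem_bot.mp (by rw [SetLike.ext'_iff.mpr h]; exact hm))
      refine ⟨⟨⟨?_, ?_⟩, hbotne, ?_⟩, ?_, ?_⟩
      · intro x hx
        rw [AddSubgroup.coe_bot, Set.mem_singleton_iff] at hx
        rw [hx]; exact G.R1.zero_mem
      · intro a _ x hx
        rw [AddSubgroup.mem_bot] at hx ⊢
        rw [hx, mul_zero]
      · intro a ha n hn han
        rw [AddSubgroup.mem_bot] at han
        rcases hdom a (Or.inl ha) n (Or.inr hn) han with h | h
        · left
          rw [hmemres]
          exact ⟨ha, fun r _ => by rw [AddSubgroup.mem_bot, h, zero_mul]⟩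
        · right; rw [AddSubgroup.mem_bot]; exact h
      · ext a
        rw [hmemres, AddSubgroup.mem_bot]
        constructor
        · rintro ⟨ha0, ha⟩
          have := ha m hm
          rw [AddSubgroup.mem_bot] at this
          rcases hdom a (Or.inl ha0) m (Or.inr hm) this with h | h
          · exact h
          · exact absurd h hm0
        · rintro rfl
          exact ⟨G.R0.zero_mem, fun r _ => by rw [AddSubgroup.mem_bot, zero_mul]⟩
      · have h2 : m * m ∈ G.sq := AddSubgroup.subset_closure ⟨m, hm, m, hm, rfl⟩
        have h3 : (m * m) * m ∈ G.cube :=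
          AddSubgroup.subset_closure ⟨m * m, h2, m, hm, rfl⟩
        have hmm : m * m ≠ 0 := by
          intro h
          rcases hdom m (Or.inr hm) m (Or.inr hm) h with h' | h' <;> exact hm0 h'
        have hmmm : (m * m) * m ≠ 0 := by
          intro h
          rcases hdom (m * m) (Or.inl (G.mul_mem_11 hm hm)) m (Or.inr hm) h with h' | h'
          · exact hmm h'
          · exact hm0 h'
        intro h
        rw [h, AddSubgroup.mem_bot] at h3
        exact hmmm h3
  · rintro (⟨hR1, h1, hdom0⟩ | ⟨⟨⟨_, _⟩, _, hprime⟩, hres, hcube⟩)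
    · refine ⟨h1, ?_⟩
      rintro r hr s hs hrs
      rcases hr with hr | hr
      · rcases hs with hs | hs
        · exact hdom0 r hr s hs hrs
        · right
          have : s ∈ ({0} : Set R) := hR1 ▸ hs
          exact this
      · left
        have : r ∈ ({0} : Set R) := hR1 ▸ hr
        exact this
    · -- helper facts
      have hres' : ∀ a ∈ G.R0, (∀ r ∈ G.R1, a * r = 0) → a = 0 := by
        intro a ha h
        have : a ∈ G.residual ⊥ := by
          rw [hmemres]
          exact ⟨ha, fun r hr => AddSubgroup.mem_bot.mpr (h r hr)⟩
        rw [hres] at this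
        exact AddSubgroup.mem_bot.mp this
      have h10 : (1 : R) ≠ 0 := by
        intro h
        apply hcube
        have hall : ∀ x : R, x = 0 := fun x => by
          rw [← mul_one x, h, mul_zero]
        ext x
        rw [AddSubgroup.mem_bot, hall x]
        simp [G.cube.zero_mem]
      have hR0dom : ∀ a ∈ G.R0, ∀ b ∈ G.R0, a * b = 0 → a = 0 ∨ b = 0 := by
        intro a ha b hb hab
        by_cases ha0 : a = 0
        · exact Or.inl ha0
        · right
          have : ¬ (∀ r ∈ G.R1, a * r = 0) := fun h => ha0 (hres' a ha h)
          push_neg at this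
          obtain ⟨r, hr, har⟩ := this
          have hbar : b * (a * r) = 0 := by
            have : b * (a * r) = (a * b) * r := by ring
            rw [this, hab, zero_mul]
          rcases hprime b hb (a * r) (G.mul_mem_01 ha hr)
              (AddSubgroup.mem_bot.mpr hbar) with h | h
          · rw [hres] at h
            exact AddSubgroup.mem_bot.mp h
          · exact absurd (AddSubgroup.mem_bot.mp h) har
      have hpairs : ∃ m ∈ G.R1, ∃ n ∈ G.R1, m * n ≠ 0 := by
        by_contra h
        push_neg at h
        apply hcube
        have hsq : G.sq = ⊥ := by
          rw [eq_bot_iff]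
          apply (AddSubgroup.closure_le _).mpr
          rintro x ⟨a, ha, b, hb, rfl⟩
          exact AddSubgroup.mem_bot.mpr (h a ha b hb)
        rw [eq_bot_iff]
        apply (AddSubgroup.closure_le _).mpr
        rintro x ⟨a, ha, b, _, rfl⟩
        rw [hsq] at ha
        rw [AddSubgroup.mem_bot.mp ha, zero_mul]
        exact AddSubgroup.zero_mem _
      have hkill : ∀ r ∈ G.R1, (∀ m ∈ G.R1, r * m = 0) → r = 0 := by
        intro r hr h
        obtain ⟨m, hm, n, hn, hmn⟩ := hpairs
        have h0 : (m * n) * r = 0 := by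
          have : (m * n) * r = (r * n) * m := by ring
          rw [this, h n hn, zero_mul]
        rcases hprime (m * n) (G.mul_mem_11 hm hn) r hr
            (AddSubgroup.mem_bot.mpr h0) with h' | h'
        · rw [hres] at h'
          exact absurd (AddSubgroup.mem_bot.mp h') hmn
        · exact AddSubgroup.mem_bot.mp h'
      refine ⟨h10, ?_⟩
      rintro r hr s hs hrs
      rcases hr with hr | hr
      · rcases hs with hs | hs
        · exact hR0dom r hr s hs hrs
        · rcases hprime r hr s hs (AddSubgroup.mem_bot.mpr hrs) with h | h
          · left
            rw [hres] at h
            exact AddSubgroup.mem_bot.mp h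
          · right; exact AddSubgroup.mem_bot.mp h
      · rcases hs with hs | hs
        · rcases hprime s hs r hr
              (AddSubgroup.mem_bot.mpr (by rw [mul_comm]; exact hrs)) with h | h
          · right
            rw [hres] at h
            exact AddSubgroup.mem_bot.mp h
          · left; exact AddSubgroup.mem_bot.mp h
        · by_cases hr0 : r = 0
          · exact Or.inl hr0
          · right
            have hrne : ¬ (∀ m ∈ G.R1, r * m = 0) := fun h => hr0 (hkill r hr h)
            push_neg at hrne
            obtain ⟨m, hm, hrm⟩ := hrne
            apply hkill s hs
            intro n hn
            have hprod : (r * m) * (s * n) = 0 := by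
              have : (r * m) * (s * n) = (r * s) * (m * n) := by ring
              rw [this, hrs, zero_mul]
            rcases hR0dom (r * m) (G.mul_mem_11 hr hm) (s * n) (G.mul_mem_11 hs hn)
                hprod with h | h
            · exact absurd h hrm
            · exact h
end

section
/- Let R = R₀ ⊕ R₁ be a Z₂-graded commutative ring. Then R is a Z₂-graded field if and only if R₀ is a field and either R₁ = 0 or R₁² ≠ 0. -/
/-- `R` is a `ℤ₂`-graded field iff `R₀` is a field and either `R₁ = 0` or
`R₁² ≠ 0`. -/
theorem graded_field_iff {R : Type*} [CommRing R] (G : Z2Grading R) :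
    G.IsGradedField ↔
      (((1 : R) ≠ 0 ∧ ∀ a ∈ G.R0, a ≠ 0 → ∃ b ∈ G.R0, a * b = 1) ∧
        ((G.R1 : Set R) = {0} ∨ G.sq ≠ (⊥ : AddSubgroup R))) := by
  have hdecomp : ∀ x : R, ∃ a ∈ G.R0, ∃ b ∈ G.R1, x = a + b := by
    intro x
    have hx : x ∈ G.R0 ⊔ G.R1 := by rw [G.sup_eq_top]; trivial
    obtain ⟨a, ha, b, hb, hab⟩ := AddSubgroup.mem_sup.mp hx
    exact ⟨a, ha, b, hb, hab.symm⟩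
  have hbot : ∀ x : R, x ∈ G.R0 → x ∈ G.R1 → x = 0 := by
    intro x h0 h1
    have : x ∈ G.R0 ⊓ G.R1 := ⟨h0, h1⟩
    rw [G.inf_eq_bot] at this
    exact this
  constructor
  · rintro ⟨h1, hu⟩
    constructor
    · refine ⟨h1, fun a ha hane => ?_⟩
      obtain ⟨x, hx, _⟩ := isUnit_iff_exists.mp (hu a (Or.inl ha) hane)
      obtain ⟨x0, hx0, x1, hx1, rfl⟩ := hdecomp x
      have key : a * x1 = 0 := by
        refine hbot _ ?_ (G.mul_mem_01 ha hx1)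
        have : a * x1 = 1 - a * x0 := by ring_nf; linear_combination hx
        rw [this]
        exact G.R0.sub_mem G.one_mem (G.mul_mem_00 ha hx0)
      refine ⟨x0, hx0, ?_⟩
      have : a * x0 + a * x1 = 1 := by rw [← mul_add]; exact hx
      rw [key, add_zero] at this
      exact this
    · by_cases h0 : (G.R1 : Set R) = {0}
      · exact Or.inl h0
      · refine Or.inr fun hsq => ?_
        have : ∃ r ∈ G.R1, r ≠ 0 := by
          by_contra hc
          push_neg at hc
          apply h0
          ext y
          simp only [Set.mem_singleton_iff]
          exact ⟨fun hy => hc y hy, fun hy => hy ▸ G.R1.zero_mem⟩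
        obtain ⟨r, hr1, hrne⟩ := this
        obtain ⟨x, hx, _⟩ := isUnit_iff_exists.mp (hu r (Or.inr hr1) hrne)
        obtain ⟨x0, hx0, x1, hx1, rfl⟩ := hdecomp x
        have key : r * x0 = 0 := by
          refine hbot _ ?_ ?_
          · have : r * x0 = 1 - r * x1 := by linear_combination hx
            rw [this]
            exact G.R0.sub_mem G.one_mem (G.mul_mem_11 hr1 hx1)
          · rw [mul_comm]; exact G.mul_mem_01 hx0 hr1
        have hone : r * x1 = 1 := by
          have : r * x0 + r * x1 = 1 := by rw [← mul_add]; exact hx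
          rw [key, zero_add] at this
          exact this
        have hmem : (1 : R) ∈ G.sq := by
          apply AddSubgroup.subset_closure
          exact ⟨r, hr1, x1, hx1, hone.symm⟩
        rw [hsq] at hmem
        exact h1 hmem
  · rintro ⟨⟨h1, hinv⟩, hcase⟩
    refine ⟨h1, ?_⟩
    rintro r (hr0 | hr1) hrne
    · obtain ⟨b, _, hab⟩ := hinv r hr0 hrne
      exact IsUnit.of_mul_eq_one (a := r) b hab
    · rcases hcase with h0 | hsq
      · exact absurd (h0 ▸ hr1 : r ∈ ({0} : Set R)) hrne
      · have : ∃ s ∈ G.R1, ∃ t ∈ G.R1, s * t ≠ 0 := by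
          by_contra hc
          push_neg at hc
          apply hsq
          rw [eq_bot_iff]
          apply (AddSubgroup.closure_le ⊥).mpr
          rintro x ⟨a, ha, b, hb, rfl⟩
          simpa using hc a ha b hb
        obtain ⟨s, hs, t, ht, hst⟩ := this
        obtain ⟨b, hb, hstb⟩ := hinv (s * t) (G.mul_mem_11 hs ht) hst
        have hrs : r * s ≠ 0 := by
          intro h
          apply hrne
          calc r = r * (s * t * b) := by rw [hstb, mul_one]
            _ = (r * s) * (t * b) := by ring
            _ = 0 := by rw [h, zero_mul]
        obtain ⟨c, _, hrsc⟩ := hinv (r * s) (G.mul_mem_11 hr1 hs) hrs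
        exact IsUnit.of_mul_eq_one (a := r) (s * c) (by rw [← mul_assoc]; exact hrsc)
end

section
/- Let R = R₀ ⊕ R₁ be a Z₂-graded commutative ring, and for x = a + r with a ∈ R₀ and r ∈ R₁ define N(x) = a² − r². Then R is an integral domain if and only if R is a Z₂-graded integral domain and N(x) = 0 implies x = 0 for all x ∈ R. -/
/-- with `N(a + r) = a² − r²` for `a ∈ R₀`, `r ∈ R₁`, the ring `R` is an
integral domain iff `R` is a `ℤ₂`-graded integral domain and `N(x) = 0` implies `x = 0`. -/
theorem isDomain_iff_graded_and_norm {R : Type*} [CommRing R] (G : Z2Grading R) :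
    IsDomain R ↔
      (G.IsGradedDomain ∧
        ∀ a r : R, a ∈ G.R0 → r ∈ G.R1 → a ^ 2 - r ^ 2 = 0 → a + r = 0) := by
  constructor
  · intro hD
    refine ⟨⟨one_ne_zero, fun r _ s _ h => mul_eq_zero.mp h⟩, ?_⟩
    intro a r ha hr h
    have h' : (a + r) * (a - r) = 0 := by ring_nf; linear_combination h
    rcases mul_eq_zero.mp h' with h0 | h0
    · exact h0
    · have har : a = r := sub_eq_zero.mp h0
      have : a ∈ G.R0 ⊓ G.R1 := ⟨ha, har ▸ hr⟩
      rw [G.inf_eq_bot] at this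
      have ha0 : a = 0 := this
      have hr0 : r = 0 := by rw [← har, ha0]
      rw [ha0, hr0, add_zero]
  · rintro ⟨⟨h1, hgd⟩, hN⟩
    haveI : Nontrivial R := ⟨1, 0, h1⟩
    haveI : NoZeroDivisors R := by
      constructor
      intro x y hxy
      obtain ⟨a, ha, r, hr, hx⟩ := AddSubgroup.mem_sup.mp
        (by rw [G.sup_eq_top]; trivial : x ∈ G.R0 ⊔ G.R1)
      obtain ⟨b, hb, s, hs, hy⟩ := AddSubgroup.mem_sup.mp
        (by rw [G.sup_eq_top]; trivial : y ∈ G.R0 ⊔ G.R1)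
      have hu0 : a * b + r * s ∈ G.R0 := G.R0.add_mem (G.mul_mem_00 ha hb) (G.mul_mem_11 hr hs)
      have hv1 : a * s + r * b ∈ G.R1 := G.R1.add_mem (G.mul_mem_01 ha hs)
        (by rw [mul_comm]; exact G.mul_mem_01 hb hr)
      have hsum : (a * b + r * s) + (a * s + r * b) = 0 := by
        rw [← hxy, ← hx, ← hy]; ring
      have hu : a * b + r * s = 0 := by
        have : a * b + r * s ∈ G.R0 ⊓ G.R1 := ⟨hu0, by
          have : a * b + r * s = -(a * s + r * b) := by linear_combination hsum
          rw [this]; exact G.R1.neg_mem hv1⟩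
        rw [G.inf_eq_bot] at this; exact this
      have hv : a * s + r * b = 0 := by linear_combination hsum - hu
      have hNmul : (a ^ 2 - r ^ 2) * (b ^ 2 - s ^ 2) = 0 := by
        have : (a ^ 2 - r ^ 2) * (b ^ 2 - s ^ 2)
            = (a * b + r * s) ^ 2 - (a * s + r * b) ^ 2 := by ring
        rw [this, hu, hv]; ring
      have hNx : a ^ 2 - r ^ 2 ∈ G.homogeneous :=
        Or.inl (G.R0.sub_mem (by simpa [sq] using G.mul_mem_00 ha ha)
          (by simpa [sq] using G.mul_mem_11 hr hr))
      have hNy : b ^ 2 - s ^ 2 ∈ G.homogeneous :=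
        Or.inl (G.R0.sub_mem (by simpa [sq] using G.mul_mem_00 hb hb)
          (by simpa [sq] using G.mul_mem_11 hs hs))
      rcases hgd _ hNx _ hNy hNmul with h0 | h0
      · left; rw [← hx]; exact hN a r ha hr h0
      · right; rw [← hy]; exact hN b s hb hs h0
    exact NoZeroDivisors.to_isDomain R
end
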